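/- Let δ ∈ (0, 1) and let (Ω, F, P) be a probability space with a measurable partition {C₁₁, C₁₂, C₂₁} of Ω satisfying P(C₁₂) = P(C₂₁) = δ/(1 + δ). Let A = C₁₂ ∪ C₂₁, let G be the σ-field generated by the partition {C₁₁ ∪ C₁₂, C₂₁}, and let H be the σ-field generated by the partition {C₁₁ ∪ C₂₁, C₁₂}. Then with X = E[1_A | G] and Y = E[1_A | H], almost surely X = δ·1_{C₁₁ ∪ C₁₂} + 1_{C₂₁} and Y = δ·1_{C₁₁ ∪ C₂₁} + 1_{C₁₂}, hence |X − Y| = (1 − δ)·1_A almost surely and P(|X − Y| ≥ 1 − δ) = P(A) = 2δ/(1 + δ). -/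

import Mathlib

open MeasureTheory Set

lemma setIntegral_indicator_one {Ω : Type} {F : MeasurableSpace Ω} (P : Measure Ω)
    {t s : Set Ω} (ht : MeasurableSet t) :
    ∫ ω in s, t.indicator (fun _ => (1:ℝ)) ω ∂P = (P (t ∩ s)).toReal := by
  rw [MeasureTheory.setIntegral_indicator ht, setIntegral_const, smul_eq_mul, mul_one,
    Set.inter_comm]
  rfl

lemma condexp_gen_pair
    {Ω : Type} {F : MeasurableSpace Ω} (P : Measure Ω) [IsProbabilityMeasure P]
    {B A : Set Ω} (hB : MeasurableSet B) (hAm : MeasurableSet A)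
    {a b : ℝ}
    (ha : (P (A ∩ B)).toReal = a * (P B).toReal)
    (hb : (P (A ∩ Bᶜ)).toReal = b * (P Bᶜ).toReal) :
    (fun ω => a * B.indicator (fun _ => (1:ℝ)) ω + b * Bᶜ.indicator (fun _ => (1:ℝ)) ω)
      =ᵐ[P] P[A.indicator (fun _ => (1:ℝ)) | MeasurableSpace.generateFrom {B}] := by
  have hm : MeasurableSpace.generateFrom {B} ≤ F :=
    MeasurableSpace.generateFrom_le (by rintro s rfl; exact hB)
  have hf : Integrable (A.indicator (fun _ => (1:ℝ))) P :=
    (integrable_const 1).indicator hAm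
  have hg : Integrable (fun ω => a * B.indicator (fun _ => (1:ℝ)) ω
      + b * Bᶜ.indicator (fun _ => (1:ℝ)) ω) P :=
    (((integrable_const 1).indicator hB).const_mul a).add
      (((integrable_const 1).indicator hB.compl).const_mul b)
  refine ae_eq_condExp_of_forall_setIntegral_eq hm hf
    (fun s _ _ => hg.integrableOn) (fun s hs _ => ?_) ?_
  · have hsum : ∀ s : Set Ω, MeasurableSet s →
        ∫ ω in s, (a * B.indicator (fun _ => (1:ℝ)) ω
          + b * Bᶜ.indicator (fun _ => (1:ℝ)) ω) ∂P
        = a * (P (B ∩ s)).toReal + b * (P (Bᶜ ∩ s)).toReal := by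
      intro s hsm
      rw [integral_add ((((integrable_const 1).indicator hB).const_mul a).integrableOn)
        ((((integrable_const 1).indicator hB.compl).const_mul b).integrableOn),
        integral_const_mul, integral_const_mul,
        setIntegral_indicator_one P hB, setIntegral_indicator_one P hB.compl]
    rcases measurableSet_generateFrom_singleton_iff.mp hs with h | h | h | h <;> rw [h]
    · simp
    · rw [hsum B hB, setIntegral_indicator_one P hAm,
        Set.inter_self, Set.compl_inter_self, ha]
      simp
    · rw [hsum Bᶜ hB.compl, setIntegral_indicator_one P hAm,
        Set.inter_compl_self, Set.inter_self, hb]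
      simp
    · rw [hsum univ MeasurableSet.univ, setIntegral_indicator_one P hAm]
      rw [Set.inter_univ, Set.inter_univ, Set.inter_univ]
      have hAsplit : P A = P (A ∩ B) + P (A ∩ Bᶜ) := by
        rw [← measure_inter_add_diff A hB, Set.diff_eq]
      rw [hAsplit, ENNReal.toReal_add (measure_ne_top _ _) (measure_ne_top _ _), ha, hb]
  · refine StronglyMeasurable.aestronglyMeasurable ?_
    have hBm : MeasurableSet[MeasurableSpace.generateFrom {B}] B :=
      MeasurableSpace.measurableSet_generateFrom rfl
    exact Measurable.stronglyMeasurable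
      (((measurable_const (a := (1:ℝ))).indicator hBm).const_mul a |>.add
        (((measurable_const (a := (1:ℝ))).indicator hBm.compl).const_mul b))

theorem three_cell_example
    {δ : ℝ} (hδ0 : 0 < δ) (hδ1 : δ < 1)
    {Ω : Type} {F : MeasurableSpace Ω} (P : Measure Ω) [IsProbabilityMeasure P]
    (C11 C12 C21 : Set Ω)
    (h11 : MeasurableSet C11) (h12 : MeasurableSet C12) (h21 : MeasurableSet C21)
    (hd1 : Disjoint C11 C12) (hd2 : Disjoint C11 C21) (hd3 : Disjoint C12 C21)
    (hcover : C11 ∪ C12 ∪ C21 = Set.univ)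
    (hP12 : P C12 = ENNReal.ofReal (δ / (1 + δ)))
    (hP21 : P C21 = ENNReal.ofReal (δ / (1 + δ)))
    (A : Set Ω) (hA : A = C12 ∪ C21)
    (G H : MeasurableSpace Ω)
    (hG : G = MeasurableSpace.generateFrom {C11 ∪ C12, C21})
    (hH : H = MeasurableSpace.generateFrom {C11 ∪ C21, C12}) :
    (∀ᵐ ω ∂P, (P[A.indicator (fun _ => (1 : ℝ)) | G]) ω
        = δ * (C11 ∪ C12).indicator (fun _ => (1 : ℝ)) ω
          + C21.indicator (fun _ => (1 : ℝ)) ω) ∧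
    (∀ᵐ ω ∂P, (P[A.indicator (fun _ => (1 : ℝ)) | H]) ω
        = δ * (C11 ∪ C21).indicator (fun _ => (1 : ℝ)) ω
          + C12.indicator (fun _ => (1 : ℝ)) ω) ∧
    (∀ᵐ ω ∂P, |(P[A.indicator (fun _ => (1 : ℝ)) | G]) ω
        - (P[A.indicator (fun _ => (1 : ℝ)) | H]) ω|
        = (1 - δ) * A.indicator (fun _ => (1 : ℝ)) ω) ∧
    P {ω | 1 - δ ≤ |(P[A.indicator (fun _ => (1 : ℝ)) | G]) ω
        - (P[A.indicator (fun _ => (1 : ℝ)) | H]) ω|} = P A ∧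
    P A = ENNReal.ofReal (2 * δ / (1 + δ)) := by
  subst hA hG hH
  have hδp : (0:ℝ) < 1 + δ := by linarith
  have hrat0 : (0:ℝ) ≤ δ / (1 + δ) := div_nonneg hδ0.le hδp.le
  have hrat1 : δ / (1 + δ) ≤ 1 := (div_le_one hδp).mpr (by linarith)
  have d1 : ∀ ω, ω ∈ C11 → ω ∉ C12 := fun ω h => Set.disjoint_left.mp hd1 h
  have d2 : ∀ ω, ω ∈ C11 → ω ∉ C21 := fun ω h => Set.disjoint_left.mp hd2 h
  have d3 : ∀ ω, ω ∈ C12 → ω ∉ C21 := fun ω h => Set.disjoint_left.mp hd3 h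
  have hcov : ∀ ω, ω ∈ C11 ∨ ω ∈ C12 ∨ ω ∈ C21 := by
    intro ω
    have : ω ∈ C11 ∪ C12 ∪ C21 := hcover ▸ Set.mem_univ ω
    rcases this with (h | h) | h
    exacts [Or.inl h, Or.inr (Or.inl h), Or.inr (Or.inr h)]
  have hc1 : C21 = (C11 ∪ C12)ᶜ := by
    ext ω; simp only [Set.mem_compl_iff, Set.mem_union]
    constructor
    · intro h
      push_neg
      exact ⟨fun h' => d2 ω h' h, fun h' => d3 ω h' h⟩
    · intro h
      push_neg at h
      rcases hcov ω with h' | h' | h'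
      exacts [absurd h' h.1, absurd h' h.2, h']
  have hc2 : C12 = (C11 ∪ C21)ᶜ := by
    ext ω; simp only [Set.mem_compl_iff, Set.mem_union]
    constructor
    · intro h
      push_neg
      exact ⟨fun h' => d1 ω h' h, d3 ω h⟩
    · intro h
      push_neg at h
      rcases hcov ω with h' | h' | h'
      exacts [absurd h' h.1, h', absurd h' h.2]
  have hAm : MeasurableSet (C12 ∪ C21) := h12.union h21
  have hEG : MeasurableSpace.generateFrom {C11 ∪ C12, C21}
      = MeasurableSpace.generateFrom {C11 ∪ C12} := by
    rw [hc1]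
    refine le_antisymm (MeasurableSpace.generateFrom_le ?_)
      (MeasurableSpace.generateFrom_mono (Set.singleton_subset_iff.mpr (Set.mem_insert _ _)))
    rintro s (rfl | rfl)
    exacts [MeasurableSpace.measurableSet_generateFrom (Set.mem_singleton _),
      (MeasurableSpace.measurableSet_generateFrom (Set.mem_singleton (C11 ∪ C12))).compl]
  have hEH : MeasurableSpace.generateFrom {C11 ∪ C21, C12}
      = MeasurableSpace.generateFrom {C11 ∪ C21} := by
    rw [hc2]
    refine le_antisymm (MeasurableSpace.generateFrom_le ?_)
      (MeasurableSpace.generateFrom_mono (Set.singleton_subset_iff.mpr (Set.mem_insert _ _)))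
    rintro s (rfl | rfl)
    exacts [MeasurableSpace.measurableSet_generateFrom (Set.mem_singleton _),
      (MeasurableSpace.measurableSet_generateFrom (Set.mem_singleton (C11 ∪ C21))).compl]
  rw [hEG, hEH]
  -- measure computations
  have htoReal21 : (P C21).toReal = δ / (1 + δ) := by
    rw [hP21, ENNReal.toReal_ofReal hrat0]
  have htoReal12 : (P C12).toReal = δ / (1 + δ) := by
    rw [hP12, ENNReal.toReal_ofReal hrat0]
  have hPB1 : (P (C11 ∪ C12)).toReal = 1 - δ / (1 + δ) := by
    have : C11 ∪ C12 = C21ᶜ := by rw [hc1, compl_compl]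
    rw [this, measure_compl h21 (measure_ne_top _ _), measure_univ, hP21,
      ENNReal.toReal_sub_of_le (ENNReal.ofReal_le_one.mpr hrat1) (by simp),
      ENNReal.toReal_one, ENNReal.toReal_ofReal hrat0]
  have hPB2 : (P (C11 ∪ C21)).toReal = 1 - δ / (1 + δ) := by
    have : C11 ∪ C21 = C12ᶜ := by rw [hc2, compl_compl]
    rw [this, measure_compl h12 (measure_ne_top _ _), measure_univ, hP12,
      ENNReal.toReal_sub_of_le (ENNReal.ofReal_le_one.mpr hrat1) (by simp),
      ENNReal.toReal_one, ENNReal.toReal_ofReal hrat0]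
  -- set identities
  have hiB1 : (C12 ∪ C21) ∩ (C11 ∪ C12) = C12 := by
    ext ω
    have := d1 ω; have := d2 ω; have := d3 ω
    simp only [Set.mem_inter_iff, Set.mem_union]
    tauto
  have hiB1c : (C12 ∪ C21) ∩ (C11 ∪ C12)ᶜ = C21 := by
    rw [← hc1]
    ext ω
    have := d3 ω
    simp only [Set.mem_inter_iff, Set.mem_union]
    tauto
  have hiB2 : (C12 ∪ C21) ∩ (C11 ∪ C21) = C21 := by
    ext ω
    have := d1 ω; have := d2 ω; have := d3 ω
    simp only [Set.mem_inter_iff, Set.mem_union]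
    tauto
  have hiB2c : (C12 ∪ C21) ∩ (C11 ∪ C21)ᶜ = C12 := by
    rw [← hc2]
    ext ω
    have := d3 ω
    simp only [Set.mem_inter_iff, Set.mem_union]
    tauto
  have harith : δ / (1 + δ) = δ * (1 - δ / (1 + δ)) := by
    field_simp
    ring
  have haG : (P ((C12 ∪ C21) ∩ (C11 ∪ C12))).toReal = δ * (P (C11 ∪ C12)).toReal := by
    rw [hiB1, htoReal12, hPB1]; exact harith
  have hbG : (P ((C12 ∪ C21) ∩ (C11 ∪ C12)ᶜ)).toReal = 1 * (P (C11 ∪ C12)ᶜ).toReal := by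
    rw [hiB1c, one_mul, ← hc1]
  have haH : (P ((C12 ∪ C21) ∩ (C11 ∪ C21))).toReal = δ * (P (C11 ∪ C21)).toReal := by
    rw [hiB2, htoReal21, hPB2]; exact harith
  have hbH : (P ((C12 ∪ C21) ∩ (C11 ∪ C21)ᶜ)).toReal = 1 * (P (C11 ∪ C21)ᶜ).toReal := by
    rw [hiB2c, one_mul, ← hc2]
  have hXeq := condexp_gen_pair P (h11.union h12) hAm haG hbG
  have hYeq := condexp_gen_pair P (h11.union h21) hAm haH hbH
  have part1 : ∀ᵐ ω ∂P,
      (P[(C12 ∪ C21).indicator (fun _ => (1 : ℝ)) | MeasurableSpace.generateFrom {C11 ∪ C12}]) ω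
        = δ * (C11 ∪ C12).indicator (fun _ => (1 : ℝ)) ω
          + C21.indicator (fun _ => (1 : ℝ)) ω := by
    filter_upwards [hXeq] with ω h
    rw [← h, hc1, one_mul]
  have part2 : ∀ᵐ ω ∂P,
      (P[(C12 ∪ C21).indicator (fun _ => (1 : ℝ)) | MeasurableSpace.generateFrom {C11 ∪ C21}]) ω
        = δ * (C11 ∪ C21).indicator (fun _ => (1 : ℝ)) ω
          + C12.indicator (fun _ => (1 : ℝ)) ω := by
    filter_upwards [hYeq] with ω h
    rw [← h, hc2, one_mul]
  have part3 : ∀ᵐ ω ∂P,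
      |(P[(C12 ∪ C21).indicator (fun _ => (1 : ℝ)) | MeasurableSpace.generateFrom {C11 ∪ C12}]) ω
        - (P[(C12 ∪ C21).indicator (fun _ => (1 : ℝ)) | MeasurableSpace.generateFrom {C11 ∪ C21}]) ω|
        = (1 - δ) * (C12 ∪ C21).indicator (fun _ => (1 : ℝ)) ω := by
    filter_upwards [part1, part2] with ω h1 h2
    rw [h1, h2]
    rcases hcov ω with h | h | h
    · rw [Set.indicator_of_mem (Set.mem_union_left _ h),
        Set.indicator_of_mem (Set.mem_union_left _ h),
        Set.indicator_of_notMem (d2 ω h),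
        Set.indicator_of_notMem (d1 ω h),
        Set.indicator_of_notMem (fun hh : ω ∈ C12 ∪ C21 => hh.elim (d1 ω h) (d2 ω h))]
      norm_num
    · have m1 : ω ∈ C11 ∪ C12 := Set.mem_union_right _ h
      have mA : ω ∈ C12 ∪ C21 := Set.mem_union_left _ h
      have n21 : ω ∉ C21 := d3 ω h
      have nB2 : ω ∉ C11 ∪ C21 := fun hh => hh.elim (fun h' => d1 ω h' h) n21
      rw [Set.indicator_of_mem m1, Set.indicator_of_mem mA, Set.indicator_of_notMem n21,
        Set.indicator_of_notMem nB2, Set.indicator_of_mem h]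
      rw [show δ * 1 + 0 - (δ * 0 + 1) = -(1 - δ) by ring, abs_neg,
        abs_of_nonneg (by linarith)]
      ring
    · have mA : ω ∈ C12 ∪ C21 := Set.mem_union_right _ h
      have m2 : ω ∈ C11 ∪ C21 := Set.mem_union_right _ h
      have n12 : ω ∉ C12 := fun h' => d3 ω h' h
      have nB1 : ω ∉ C11 ∪ C12 := fun hh => hh.elim (fun h' => d2 ω h' h) n12
      rw [Set.indicator_of_mem mA, Set.indicator_of_mem m2, Set.indicator_of_notMem n12,
        Set.indicator_of_notMem nB1, Set.indicator_of_mem h]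
      rw [show δ * 0 + 1 - (δ * 1 + 0) = 1 - δ by ring, abs_of_nonneg (by linarith)]
      ring
  have part4 : P {ω | 1 - δ ≤
      |(P[(C12 ∪ C21).indicator (fun _ => (1 : ℝ)) | MeasurableSpace.generateFrom {C11 ∪ C12}]) ω
        - (P[(C12 ∪ C21).indicator (fun _ => (1 : ℝ)) | MeasurableSpace.generateFrom {C11 ∪ C21}]) ω|}
      = P (C12 ∪ C21) := by
    refine measure_congr ?_
    rw [Filter.eventuallyEq_set]
    filter_upwards [part3] with ω h
    simp only [Set.mem_setOf_eq, h]
    by_cases hω : ω ∈ C12 ∪ C21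
    · rw [Set.indicator_of_mem hω, mul_one]
      exact iff_of_true le_rfl hω
    · rw [Set.indicator_of_notMem hω]
      simp only [mul_zero, hω, iff_false]
      intro hcon
      linarith
  have part5 : P (C12 ∪ C21) = ENNReal.ofReal (2 * δ / (1 + δ)) := by
    rw [measure_union hd3 h21, hP12, hP21,
      ← ENNReal.ofReal_add hrat0 hrat0]
    congr 1
    field_simp
    ring
  exact ⟨part1, part2, part3, part4, part5⟩
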